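/- Let g : ℝ → ℝ∪{−∞} be concave and upper semicontinuous with g(λ) = E_μ[z_x(λ)], where z_x(λ) = inf_y[f(y) + (λ/2)‖y − x‖²] and f is L-smooth and ρ-semiconvex with ρ ≤ L. If for all λ > L one has E_μ[lim_{δ→0} inf_{y δ-optimal} ‖y − x‖²/2] ≥ E_μ[‖∇f(x)‖²]/(8λ²), and ψ* is convex non-decreasing with left derivative at ρ satisfying ∂₋ψ*(ρ) ≤ E_μ[‖∇f(x)‖²]/(8L²), then g(ρ) − ψ*(ρ) ≥ g(λ) − ψ*(λ) for every λ < ρ; i.e., the dual supremum over ℝ may be restricted to λ ≥ ρ. -/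

import Mathlib

open MeasureTheory

/-- the dual objective `g(λ) − ψ*(λ)` is maximized on `λ ≥ ρ`.
Here `g(λ) = E_μ[inf_y (f y + (λ/2)‖y−x‖²)]` is concave with right derivative
at least `A/(8λ²)` for `λ ≥ L` (where `A = E_μ[‖∇f‖²]`), encoded through the
corresponding secant inequality; `ψ*` is convex, non-decreasing, with left
derivative at `ρ` at most `A/(8L²)`, encoded through the corresponding secant
bound. Then `g(ρ) − ψ*(ρ) ≥ g(λ') − ψ*(λ')` for every `λ' < ρ`. -/
theorem dual_sup_restricted_to_lambda_ge_rho {d : ℕ}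
    (f : EuclideanSpace ℝ (Fin d) → ℝ)
    (G : EuclideanSpace ℝ (Fin d) → EuclideanSpace ℝ (Fin d))
    (hG : ∀ y, HasGradientAt f (G y) y)
    (L ρ : ℝ) (hρ0 : 0 ≤ ρ) (hρL : ρ ≤ L) (hL : 0 < L)
    (hsmooth : ∀ x y, ‖G x - G y‖ ≤ L * ‖x - y‖)
    (hsemi : ConvexOn ℝ Set.univ (fun y => f y + ρ / 2 * ‖y‖ ^ 2))
    (μ : Measure (EuclideanSpace ℝ (Fin d))) [IsProbabilityMeasure μ]
    (hGint : Integrable (fun x => ‖G x‖ ^ 2) μ)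
    (A : ℝ) (hA : A = ∫ x, ‖G x‖ ^ 2 ∂μ)
    (g : ℝ → ℝ) (hconc : ConcaveOn ℝ Set.univ g)
    (hg : ∀ lam, L ≤ lam → ∀ lam', lam' < lam →
      g lam' + A / (8 * lam ^ 2) * (lam - lam') ≤ g lam)
    (ψstar : ℝ → ℝ) (hψconv : ConvexOn ℝ Set.univ ψstar) (hψmono : Monotone ψstar)
    (hψderiv : ∀ lam', lam' < ρ → ψstar ρ - ψstar lam' ≤ A / (8 * L ^ 2) * (ρ - lam')) :
    ∀ lam', lam' < ρ → g lam' - ψstar lam' ≤ g ρ - ψstar ρ := by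
  intro lam' hlt
  have hlam'L : lam' < L := lt_of_lt_of_le hlt hρL
  have key : g lam' + A / (8 * L ^ 2) * (ρ - lam') ≤ g ρ := by
    rcases eq_or_lt_of_le hρL with h | h
    · rw [h]; exact hg L le_rfl lam' hlam'L
    · set t : ℝ := (L - ρ) / (L - lam') with ht
      have hden : (0:ℝ) < L - lam' := by linarith
      have ht0 : 0 ≤ t := div_nonneg (by linarith) hden.le
      have ht1 : 0 ≤ 1 - t := by
        have : t ≤ 1 := (div_le_one hden).2 (by linarith)
        linarith
      have hsum : t + (1 - t) = 1 := by ring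
      have hcomb := hconc.2 (Set.mem_univ lam') (Set.mem_univ L) ht0 ht1 hsum
      have hx : t • lam' + (1 - t) • L = ρ := by
        simp only [smul_eq_mul, ht]
        field_simp
        ring
      rw [hx] at hcomb
      have hgL := hg L le_rfl lam' hlam'L
      have h1t : (1 - t) * (L - lam') = ρ - lam' := by
        simp only [ht]; field_simp; ring
      simp only [smul_eq_mul] at hcomb
      have hmul := mul_le_mul_of_nonneg_left hgL ht1
      have h2 : (1 - t) * (g lam' + A / (8 * L ^ 2) * (L - lam')) =
          (1 - t) * g lam' + A / (8 * L ^ 2) * (ρ - lam') := by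
        rw [← h1t]; ring
      rw [h2] at hmul
      nlinarith [hcomb, hmul]
  have := hψderiv lam' hlt
  linarith
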